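/- If λ_max(R_k) → 0 and ‖θ_reg,k‖ ≤ C for all k, and λ_min(Σ_{i=0}^{k_rank} φ_iᵀΓ_iφ_i) = λ* > 0, then for all k ≥ k_rank the error θ̃_{k+1} = (R_k + Σ_{i=0}^k φ_iᵀΓ_iφ_i)⁻¹R_k(θ_reg,k - θ) satisfies ‖θ̃_{k+1}‖ ≤ (λ_max(R_k)/λ*)(C + ‖θ‖), and consequently θ̃_k → 0. -/

import Mathlib

open Matrix Finset Filter

noncomputable def euclNorm {n : ℕ} (x : Fin n → ℝ) : ℝ :=
  ‖(EuclideanSpace.equiv (Fin n) ℝ).symm x‖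

lemma repr_mulVec {n : ℕ} {M : Matrix (Fin n) (Fin n) ℝ} (hM : M.IsHermitian)
    (x : Fin n → ℝ) (i : Fin n) :
    hM.eigenvectorBasis.repr ((EuclideanSpace.equiv (Fin n) ℝ).symm (M *ᵥ x)) i
      = hM.eigenvalues i * hM.eigenvectorBasis.repr ((EuclideanSpace.equiv (Fin n) ℝ).symm x) i := by
  rw [OrthonormalBasis.repr_apply_apply, OrthonormalBasis.repr_apply_apply]
  simp only [PiLp.inner_apply, RCLike.inner_apply, starRingEnd_apply, star_trivial]
  have h1 : ∑ j, ((EuclideanSpace.equiv (Fin n) ℝ).symm (M *ᵥ x)) j * (hM.eigenvectorBasis i) j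
      = (⇑(hM.eigenvectorBasis i)) ⬝ᵥ (M *ᵥ x) := by rw [dotProduct_comm]; rfl
  have hT : Mᵀ = M := by rw [← Matrix.conjTranspose_eq_transpose_of_trivial]; exact hM
  have h2 : (⇑(hM.eigenvectorBasis i)) ᵥ* M = hM.eigenvalues i • ⇑(hM.eigenvectorBasis i) := by
    rw [← mulVec_transpose, hT]
    exact hM.mulVec_eigenvectorBasis i
  rw [h1, dotProduct_mulVec, h2, smul_dotProduct, dotProduct_comm]
  rfl

lemma mulVec_enorm_le {n : ℕ} {M : Matrix (Fin n) (Fin n) ℝ} (hM : M.PosSemidef)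
    {μ : ℝ} (hμ0 : 0 ≤ μ) (hμ : ∀ i, hM.1.eigenvalues i ≤ μ) (x : Fin n → ℝ) :
    euclNorm (M *ᵥ x) ≤ μ * euclNorm x := by
  classical
  set b := hM.1.eigenvectorBasis with hb
  set y := (EuclideanSpace.equiv (Fin n) ℝ).symm x with hy0
  set z := (EuclideanSpace.equiv (Fin n) ℝ).symm (M *ᵥ x) with hz0
  have hz : ‖z‖ = ‖b.repr z‖ := (b.repr.norm_map z).symm
  have hy : ‖y‖ = ‖b.repr y‖ := (b.repr.norm_map y).symm
  have hsq : ‖b.repr z‖^2 ≤ (μ * ‖b.repr y‖)^2 := by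
    rw [mul_pow, PiLp.norm_sq_eq_of_L2, PiLp.norm_sq_eq_of_L2, Finset.mul_sum]
    apply Finset.sum_le_sum
    intro i _
    have h := repr_mulVec hM.1 x i
    rw [Real.norm_eq_abs, Real.norm_eq_abs, sq_abs, sq_abs, h, mul_pow]
    have h1 : (hM.1.eigenvalues i)^2 ≤ μ^2 := by
      apply sq_le_sq'
      · linarith [hM.eigenvalues_nonneg i]
      · exact hμ i
    nlinarith [sq_nonneg (b.repr y i)]
  have : ‖z‖ ≤ μ * ‖y‖ := by
    rw [hz, hy]
    have h2 : (0:ℝ) ≤ μ * ‖b.repr y‖ := by positivity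
    nlinarith [norm_nonneg (b.repr z)]
  exact this

lemma quad_ge {n : ℕ} {M : Matrix (Fin n) (Fin n) ℝ} (hM : M.PosSemidef)
    {lam : ℝ} (hlam : ∀ i, lam ≤ hM.1.eigenvalues i) (x : Fin n → ℝ) :
    lam * euclNorm x ^ 2 ≤ x ⬝ᵥ (M *ᵥ x) := by
  classical
  set b := hM.1.eigenvectorBasis with hb
  set y := (EuclideanSpace.equiv (Fin n) ℝ).symm x with hy0
  set z := (EuclideanSpace.equiv (Fin n) ℝ).symm (M *ᵥ x) with hz0
  have hinner : x ⬝ᵥ (M *ᵥ x) = (inner ℝ y z : ℝ) := by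
    rw [dotProduct_comm]
    simp only [PiLp.inner_apply, RCLike.inner_apply, starRingEnd_apply, star_trivial]
    rfl
  have h2 : (inner ℝ y z : ℝ) = inner ℝ (b.repr y) (b.repr z) :=
    (b.repr.inner_map_map y z).symm
  have h3 : (inner ℝ (b.repr y) (b.repr z) : ℝ) = ∑ i, b.repr y i * b.repr z i := by
    simp only [PiLp.inner_apply, RCLike.inner_apply, starRingEnd_apply, star_trivial]
    exact Finset.sum_congr rfl (fun i _ => mul_comm _ _)
  have h4 : lam * ‖b.repr y‖^2 ≤ ∑ i, b.repr y i * b.repr z i := by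
    rw [PiLp.norm_sq_eq_of_L2, Finset.mul_sum]
    apply Finset.sum_le_sum
    intro i _
    rw [repr_mulVec hM.1 x i, Real.norm_eq_abs, sq_abs]
    have := hlam i
    nlinarith [sq_nonneg (b.repr y i)]
  have hy : ‖y‖ = ‖b.repr y‖ := (b.repr.norm_map y).symm
  rw [hinner, h2, h3]
  calc lam * euclNorm x ^2 = lam * ‖b.repr y‖^2 := by rw [euclNorm, ← hy0, hy]
    _ ≤ _ := h4

lemma dotq {n : ℕ} {M : Matrix (Fin n) (Fin n) ℝ} (h : M.PosSemidef) (w : Fin n → ℝ) :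
    0 ≤ w ⬝ᵥ (M *ᵥ w) := by simpa using h.dotProduct_mulVec_nonneg w

lemma dot_le_enorm {n : ℕ} (w u : Fin n → ℝ) : w ⬝ᵥ u ≤ euclNorm w * euclNorm u := by
  have h : w ⬝ᵥ u = (inner ℝ ((EuclideanSpace.equiv (Fin n) ℝ).symm w)
      ((EuclideanSpace.equiv (Fin n) ℝ).symm u) : ℝ) := by
    rw [dotProduct_comm]
    simp only [PiLp.inner_apply, RCLike.inner_apply, starRingEnd_apply, star_trivial]
    rfl
  rw [h]
  exact real_inner_le_norm _ _

theorem fading_reg_error_bound_and_convergence (p n : ℕ)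
    (φ : ℕ → Matrix (Fin p) (Fin n) ℝ)
    (Γ : ℕ → Matrix (Fin p) (Fin p) ℝ) (hΓ : ∀ i, (Γ i).PosSemidef)
    (R : ℕ → Matrix (Fin n) (Fin n) ℝ) (hR : ∀ i, (R i).PosSemidef)
    (S : ℕ → Matrix (Fin n) (Fin n) ℝ)
    (hS : ∀ k, S k = ∑ i ∈ range (k + 1), (φ i)ᵀ * Γ i * φ i)
    (hpd : ∀ k, (R k + S k).PosDef)
    (θreg : ℕ → Fin n → ℝ) (θtrue : Fin n → ℝ)
    (C : ℝ) (hC : ∀ k, euclNorm (θreg k) ≤ C)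
    (hRmax : Tendsto (fun k => ⨆ i, (hR k).1.eigenvalues i) atTop (nhds 0))
    (krank : ℕ) (hSr : (S krank).PosSemidef)
    (lamstar : ℝ) (hlam : lamstar = ⨅ i, hSr.1.eigenvalues i) (hlampos : 0 < lamstar)
    (θtil : ℕ → Fin n → ℝ)
    (hθtil : ∀ k, θtil (k + 1) = ((R k + S k)⁻¹ * R k).mulVec (θreg k - θtrue)) :
    (∀ k, krank ≤ k →
      euclNorm (θtil (k + 1)) ≤ ((⨆ i, (hR k).1.eigenvalues i) / lamstar) * (C + euclNorm θtrue)) ∧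
    Tendsto θtil atTop (nhds 0) := by
  classical
  have hC0 : 0 ≤ C := le_trans (norm_nonneg _) (hC 0)
  have hCθ : 0 ≤ C + euclNorm θtrue := by
    have : (0:ℝ) ≤ euclNorm θtrue := norm_nonneg _
    linarith
  have hμle : ∀ k i, (hR k).1.eigenvalues i ≤ ⨆ j, (hR k).1.eigenvalues j := by
    intro k i
    exact le_ciSup (Set.Finite.bddAbove (Set.finite_range _)) i
  have hμ0 : ∀ k, 0 ≤ ⨆ j, (hR k).1.eigenvalues j := by
    intro k
    rcases isEmpty_or_nonempty (Fin n) with h | h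
    · rw [iSup, Set.range_eq_empty, Real.sSup_empty]
    · obtain ⟨i⟩ := h
      exact le_trans ((hR k).eigenvalues_nonneg i) (hμle k i)
  have hlamle : ∀ i, lamstar ≤ hSr.1.eigenvalues i := by
    intro i
    rw [hlam]
    exact ciInf_le (Set.Finite.bddBelow (Set.finite_range _)) i
  have key : ∀ k, krank ≤ k →
      euclNorm (θtil (k + 1)) ≤ ((⨆ i, (hR k).1.eigenvalues i) / lamstar) * (C + euclNorm θtrue) := by
    intro k hk
    set μ := ⨆ j, (hR k).1.eigenvalues j with hμdef
    have hμ0' : 0 ≤ μ := hμ0 k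
    set v := θreg k - θtrue with hv
    set w := θtil (k+1) with hw
    have hvle : euclNorm v ≤ C + euclNorm θtrue := by
      rw [hv, euclNorm, map_sub]
      refine (norm_sub_le _ _).trans ?_
      have := hC k
      rw [euclNorm] at this
      have h2 : euclNorm θtrue = ‖(EuclideanSpace.equiv (Fin n) ℝ).symm θtrue‖ := rfl
      linarith
    set u := R k *ᵥ v with hu
    -- split S k
    obtain ⟨T, hTpsd, hsplit⟩ : ∃ T : Matrix (Fin n) (Fin n) ℝ, T.PosSemidef ∧
        S k = S krank + T := by
      refine ⟨∑ i ∈ Finset.Ico (krank+1) (k+1), (φ i)ᵀ * Γ i * φ i, ?_, ?_⟩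
      · apply Finset.sum_induction (fun i => (φ i)ᵀ * Γ i * φ i)
          (fun A => Matrix.PosSemidef A) (fun a b ha hb => ha.add hb)
          (Matrix.PosSemidef.zero)
        intro i _
        have h1 : (φ i)ᵀ = (φ i)ᴴ := by
          ext a b; simp [Matrix.conjTranspose_apply]
        rw [h1]
        exact (hΓ i).conjTranspose_mul_mul_same (φ i)
      · rw [hS, hS, Finset.range_eq_Ico, Finset.range_eq_Ico]
        exact (Finset.sum_Ico_consecutive (fun i => (φ i)ᵀ * Γ i * φ i) (Nat.zero_le (krank+1))
          (Nat.succ_le_succ hk)).symm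
    have hdetu : IsUnit (R k + S k).det := isUnit_iff_ne_zero.mpr (hpd k).det_pos.ne'
    have hAw : (R k + S k) *ᵥ w = u := by
      rw [hw, hθtil k, ← hv, Matrix.mulVec_mulVec, ← Matrix.mul_assoc,
        Matrix.mul_nonsing_inv _ hdetu, Matrix.one_mul]
    have h1 : euclNorm u ≤ μ * euclNorm v := mulVec_enorm_le (hR k) hμ0' (hμle k) v
    have h2 : lamstar * euclNorm w ^ 2 ≤ w ⬝ᵥ ((R k + S k) *ᵥ w) := by
      have hq1 : lamstar * euclNorm w ^ 2 ≤ w ⬝ᵥ (S krank *ᵥ w) := quad_ge hSr hlamle w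
      have hq2 : 0 ≤ w ⬝ᵥ (R k *ᵥ w) := dotq (hR k) w
      have hq3 : 0 ≤ w ⬝ᵥ (T *ᵥ w) := dotq hTpsd w
      rw [Matrix.add_mulVec, dotProduct_add, hsplit, Matrix.add_mulVec, dotProduct_add]
      linarith
    have h4 : w ⬝ᵥ u ≤ euclNorm w * euclNorm u := dot_le_enorm w u
    have h5 : lamstar * euclNorm w ^ 2 ≤ euclNorm w * (μ * euclNorm v) := by
      rw [hAw] at h2
      have := mul_le_mul_of_nonneg_left h1 (norm_nonneg
        ((EuclideanSpace.equiv (Fin n) ℝ).symm w))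
      calc lamstar * euclNorm w ^ 2 ≤ w ⬝ᵥ u := h2
        _ ≤ euclNorm w * euclNorm u := h4
        _ ≤ euclNorm w * (μ * euclNorm v) := this
    have hw0 : (0:ℝ) ≤ euclNorm w := norm_nonneg _
    rcases eq_or_lt_of_le hw0 with hweq | hwpos
    · rw [← hweq]
      positivity
    · have h6 : lamstar * euclNorm w ≤ μ * euclNorm v := by nlinarith
      have h7 : euclNorm w ≤ μ * euclNorm v / lamstar := by
        rw [le_div_iff₀ hlampos]; linarith
      calc euclNorm w ≤ μ * euclNorm v / lamstar := h7
        _ ≤ μ * (C + euclNorm θtrue) / lamstar := by gcongr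
        _ = μ / lamstar * (C + euclNorm θtrue) := by ring
  refine ⟨key, ?_⟩
  rw [← Filter.tendsto_add_atTop_iff_nat 1]
  have hb : Tendsto (fun k => ((⨆ i, (hR k).1.eigenvalues i) / lamstar) * (C + euclNorm θtrue))
      atTop (nhds 0) := by
    have := (hRmax.div_const lamstar).mul_const (C + euclNorm θtrue)
    simpa using this
  have hnorm0 : Tendsto (fun k => euclNorm (θtil (k+1))) atTop (nhds 0) := by
    apply squeeze_zero' (Filter.eventually_atTop.2 ⟨krank, fun k _ => norm_nonneg _⟩)
      (Filter.eventually_atTop.2 ⟨krank, fun k hk => key k hk⟩) hb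
  have h2 : Tendsto (fun k => (EuclideanSpace.equiv (Fin n) ℝ).symm (θtil (k+1)))
      atTop (nhds 0) := by
    rw [tendsto_zero_iff_norm_tendsto_zero]
    exact hnorm0
  have h3 := ((EuclideanSpace.equiv (Fin n) ℝ).continuous.tendsto 0).comp h2
  exact h3
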